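/- With the axioms of the Bernstein–Zelevinsky formalism (Φ⁻Φ⁺ ≅ Id, Ψ⁻Ψ⁺ ≅ Id, Φ⁻Ψ⁺ = 0, Ψ⁻Φ⁺ = 0, exactness of all four functors, and the natural short exact sequence 0 → Φ⁺Φ⁻ → Id → Ψ⁺Ψ⁻ → 0), if τ is a simple object (of 'size d', so that (Φ⁻)^d τ = 0) then there is exactly one k with τ^{(k)} := Ψ⁻(Φ⁻)^{k-1}(τ) ≠ 0, and τ ≅ (Φ⁺)^{k-1} Ψ⁺(τ^{(k)}). -/

import Mathlib

open CategoryTheory CategoryTheory.Limits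

/-- The `k`-fold composition of an endofunctor. -/
def functorPow {A : Type*} [Category A] (T : A ⥤ A) : ℕ → (A ⥤ A)
  | 0 => 𝟭 A
  | k + 1 => T ⋙ functorPow T k

lemma functorPow_succ_obj' {A : Type*} [Category A] (T : A ⥤ A) (k : ℕ) (X : A) :
    (functorPow T (k + 1)).obj X = T.obj ((functorPow T k).obj X) := by
  induction k generalizing X with
  | zero => rfl
  | succ k ih => exact ih (T.obj X)

lemma isZero_functorPow {A : Type*} [Category A] [Abelian A] (T : A ⥤ A)
    [PreservesFiniteLimits T] [PreservesFiniteColimits T] (k : ℕ) {X : A} (h : IsZero X) :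
    IsZero ((functorPow T k).obj X) := by
  induction k generalizing X with
  | zero => exact h
  | succ k ih => exact ih (T.map_isZero h)

/-- With the Bernstein–Zelevinsky axioms, a simple object `τ` of "size `d`"
(`(Φ⁻)^d τ = 0`) has exactly one `k` with nonzero `k`-th derivative
`τ^{(k)} = Ψ⁻(Φ⁻)^{k-1} τ`, and then `τ ≅ (Φ⁺)^{k-1} Ψ⁺ (τ^{(k)})`. -/
theorem bernstein_zelevinsky_simple_derivative
    {A : Type*} [Category A] [Abelian A]
    (Φp Φm Ψp Ψm : A ⥤ A)
    (adjΦ : Φp ⊣ Φm)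
    [PreservesFiniteLimits Φp] [PreservesFiniteColimits Φp]
    [PreservesFiniteLimits Φm] [PreservesFiniteColimits Φm]
    [PreservesFiniteLimits Ψp] [PreservesFiniteColimits Ψp]
    [PreservesFiniteLimits Ψm] [PreservesFiniteColimits Ψm]
    (eΦ : Φp ⋙ Φm ≅ 𝟭 A) (eΨ : Ψp ⋙ Ψm ≅ 𝟭 A)
    (hΦΨ : ∀ X : A, IsZero (Φm.obj (Ψp.obj X)))
    (hΨΦ : ∀ X : A, IsZero (Ψm.obj (Φp.obj X)))
    (ε : (Φm ⋙ Φp) ⟶ 𝟭 A) (η : 𝟭 A ⟶ (Ψm ⋙ Ψp))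
    (hcomp : ∀ X : A, ε.app X ≫ η.app X = 0)
    (hSES : ∀ X : A, (ShortComplex.mk (ε.app X) (η.app X) (hcomp X)).ShortExact)
    -- `Φ⁺` and `Ψ⁺` preserve being nonzero, and `Φ⁺` preserves irreducibility when
    -- applied to `Ψ⁺` of an object:
    (hΦnz : ∀ X : A, ¬ IsZero X → ¬ IsZero (Φp.obj X))
    (hΨnz : ∀ X : A, ¬ IsZero X → ¬ IsZero (Ψp.obj X))
    (hΦsimple : ∀ X : A, Simple (Ψp.obj X) → Simple (Φp.obj (Ψp.obj X)))
    (d : ℕ) (τ : A) (hτ : Simple τ) (hd : IsZero ((functorPow Φm d).obj τ)) :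
    ∃ k : ℕ, 1 ≤ k ∧
      ¬ IsZero (Ψm.obj ((functorPow Φm (k - 1)).obj τ)) ∧
      Nonempty (τ ≅ (functorPow Φp (k - 1)).obj
        (Ψp.obj (Ψm.obj ((functorPow Φm (k - 1)).obj τ)))) ∧
      ∀ k' : ℕ, 1 ≤ k' → ¬ IsZero (Ψm.obj ((functorPow Φm (k' - 1)).obj τ)) →
        k' = k := by
  induction d generalizing τ with
  | zero => exact absurd hd (Simple.not_isZero τ)
  | succ d ih =>
    have hτnz : ¬ IsZero τ := Simple.not_isZero τ
    haveI hmono : Mono (ε.app τ) := (hSES τ).mono_f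
    haveI hepi : Epi (η.app τ) := (hSES τ).epi_g
    haveI hτ' : Simple ((𝟭 A).obj τ) := hτ
    by_cases hε : ε.app τ = 0
    · -- Case B : `Φ⁺Φ⁻ τ = 0`, so `τ ≅ Ψ⁺Ψ⁻ τ` and `k = 1`.
      have hΦpΦmz : IsZero (Φp.obj (Φm.obj τ)) := IsZero.of_mono_eq_zero (ε.app τ) hε
      have hΦmz : IsZero (Φm.obj τ) := by
        by_contra h
        exact hΦnz _ h hΦpΦmz
      haveI hmonoη : Mono (η.app τ) := (hSES τ).exact.mono_g hε
      haveI hisoη : IsIso (η.app τ) := isIso_of_mono_of_epi _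
      have hΨmnz : ¬ IsZero (Ψm.obj τ) := by
        intro h
        exact hτnz ((Ψp.map_isZero h).of_iso (asIso (η.app τ)))
      refine ⟨1, le_refl 1, hΨmnz, ⟨@asIso _ _ _ _ (η.app τ) hisoη⟩, ?_⟩
      intro k' hk' hnz
      by_contra hne
      obtain ⟨m, rfl⟩ : ∃ m, k' = m + 2 := ⟨k' - 2, by omega⟩
      exact hnz (Ψm.map_isZero (isZero_functorPow Φm m hΦmz))
    · -- Case A : `ε.app τ` is an isomorphism, so `τ ≅ Φ⁺Φ⁻ τ`.
      haveI hiso : IsIso (ε.app τ) := (Simple.mono_isIso_iff_nonzero (ε.app τ)).mpr hε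
      have hη0 : η.app τ = 0 := by
        rw [← cancel_epi (ε.app τ)]
        simpa using hcomp τ
      have hΨΨz : IsZero (Ψp.obj (Ψm.obj τ)) := IsZero.of_epi_eq_zero (η.app τ) hη0
      have hΨmz : IsZero (Ψm.obj τ) := by
        by_contra h
        exact hΨnz _ h hΨΨz
      have hΦmnz : ¬ IsZero (Φm.obj τ) := by
        intro h
        exact hτnz ((Φp.map_isZero h).of_iso (asIso (ε.app τ)).symm)
      have hsimple : Simple (Φm.obj τ) := by
        constructor
        intro Y f hf
        constructor
        · intro hiso' h0
          haveI := hiso'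
          exact hΦmnz (IsZero.of_epi_eq_zero f h0)
        · intro hfne
          have hYnz : ¬ IsZero Y := fun h => hfne (h.eq_of_src f 0)
          have h1 : Φp.map f ≠ 0 := fun h => hΦnz Y hYnz (IsZero.of_mono_eq_zero _ h)
          have h2 : Φp.map f ≫ ε.app τ ≠ 0 := by
            intro h
            apply h1
            rw [← cancel_mono (ε.app τ), h, zero_comp]
          haveI h3 : IsIso (Φp.map f ≫ ε.app τ) :=
            (Simple.mono_isIso_iff_nonzero (Φp.map f ≫ ε.app τ)).mpr h2
          haveI h4 : IsIso (Φp.map f) := IsIso.of_isIso_comp_right (Φp.map f) (ε.app τ)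
          haveI h5 : IsIso ((Φp ⋙ Φm).map f) := by
            show IsIso (Φm.map (Φp.map f))
            infer_instance
          have heq : eΦ.inv.app Y ≫ ((Φp ⋙ Φm).map f ≫ eΦ.hom.app (Φm.obj τ)) = f := by
            rw [eΦ.hom.naturality f]
            simp
          rw [← heq]
          infer_instance
      obtain ⟨k', hk'1, hk'nz, ⟨ihiso⟩, hk'uniq⟩ := ih (Φm.obj τ) hsimple hd
      obtain ⟨j, rfl⟩ : ∃ j, k' = j + 1 := ⟨k' - 1, by omega⟩
      refine ⟨j + 2, by omega, hk'nz, ?_, ?_⟩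
      · refine ⟨?_⟩
        show τ ≅ (functorPow Φp (j + 1)).obj (Ψp.obj (Ψm.obj ((functorPow Φm (j + 1)).obj τ)))
        rw [functorPow_succ_obj']
        exact (asIso (ε.app τ)).symm ≪≫ Φp.mapIso ihiso
      · intro k'' hk'' hnz
        match k'' with
        | 1 => exact absurd hΨmz hnz
        | (m + 2) =>
          have h := hk'uniq (m + 1) (by omega) hnz
          omega
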